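/- Let f : [a,b] ⊆ [0,∞) → [0,∞) be continuous, 0 ≤ a < b, with f in the Godunova–Levin class Q (i.e., f nonnegative and f(λx+(1-λ)y) ≤ f(x)/λ + f(y)/(1-λ) for all x,y ∈ [a,b], λ ∈ (0,1)), and p, q > 1. Then ∫_a^b (x-a)^p (b-x)^q f(x) f(a+b-x) dx ≤ ((b-a)^{p+q+1}/2) { (f(a)^2+f(b)^2)(B(p+1,q-1) + B(p-1,q+1)) + 4 f(a) f(b) B(p,q) }. -/

import Mathlib

open MeasureTheory Set

lemma betaInt_left (α β : ℝ) (hα : -1 < α) :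
    IntervalIntegrable (fun t : ℝ => t ^ α * (1 - t) ^ β) volume 0 (1/2) := by
  have hmeas : AEStronglyMeasurable (fun t : ℝ => t ^ α * (1 - t) ^ β)
      (volume.restrict (Set.uIoc (0:ℝ) (1/2))) := by
    rw [uIoc_of_le (by norm_num : (0:ℝ) ≤ 1/2)]
    have hc : ContinuousOn (fun t : ℝ => t ^ α * (1 - t) ^ β) (Ioc 0 (1/2)) := by
      apply ContinuousOn.mul
      · exact ContinuousOn.rpow_const continuousOn_id fun x hx => Or.inl hx.1.ne'
      · exact ContinuousOn.rpow_const ((continuous_const.sub continuous_id).continuousOn)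
          fun x hx => Or.inl (show (1:ℝ) - x ≠ 0 from
            (by nlinarith [hx.2] : (0:ℝ) < 1 - x).ne')
    exact hc.aestronglyMeasurable measurableSet_Ioc
  set C : ℝ := max 1 ((1/2 : ℝ) ^ β) with hC
  have hInt : IntervalIntegrable (fun t : ℝ => C * t ^ α) volume 0 (1/2) :=
    (intervalIntegral.intervalIntegrable_rpow' hα).const_mul C
  refine hInt.mono_fun hmeas ?_
  filter_upwards [ae_restrict_mem measurableSet_uIoc] with t ht
  rw [uIoc_of_le (by norm_num : (0:ℝ) ≤ 1/2)] at ht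
  obtain ⟨ht0, ht1⟩ := ht
  have h1t : (1:ℝ)/2 ≤ 1 - t := by linarith
  have h1t0 : (0:ℝ) < 1 - t := by linarith
  have hb : (1 - t) ^ β ≤ C := by
    rcases le_or_gt 0 β with hβ | hβ
    · exact le_max_of_le_left (Real.rpow_le_one h1t0.le (by linarith) hβ)
    · exact le_max_of_le_right (Real.rpow_le_rpow_of_nonpos (by norm_num) h1t hβ.le)
  have htα : 0 ≤ t ^ α := Real.rpow_nonneg ht0.le α
  rw [Real.norm_eq_abs, Real.norm_eq_abs, abs_of_nonneg (mul_nonneg htα (Real.rpow_nonneg h1t0.le β)),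
    abs_of_nonneg (mul_nonneg (le_max_of_le_left zero_le_one : (0:ℝ) ≤ C) htα)]
  calc t ^ α * (1 - t) ^ β ≤ t ^ α * C := by
        exact mul_le_mul_of_nonneg_left hb htα
    _ = C * t ^ α := mul_comm _ _

lemma betaInt (α β : ℝ) (hα : -1 < α) (hβ : -1 < β) :
    IntervalIntegrable (fun t : ℝ => t ^ α * (1 - t) ^ β) volume 0 1 := by
  have h2 := (betaInt_left β α hβ).comp_sub_left 1
  simp only [sub_sub_cancel] at h2
  have h2' : IntervalIntegrable (fun t : ℝ => t ^ α * (1 - t) ^ β) volume (1/2) 1 := by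
    have : (1:ℝ) - 0 = 1 := by norm_num
    have h2'' := h2
    rw [show (1:ℝ) - 0 = 1 by norm_num, show (1:ℝ) - 1/2 = 1/2 by norm_num] at h2''
    refine (h2''.symm).congr ?_
    intro t _
    exact mul_comm _ _
  exact (betaInt_left α β hα).trans h2'

lemma coreIneq (A B c d t : ℝ) (hA : 0 ≤ A) (hB : 0 ≤ B) (hc : 0 ≤ c) (hd : 0 ≤ d)
    (h0 : 0 < t) (h1 : t < 1) :
    c * t * t * (d * (1 - t) * (1 - t)) * ((B / t + A / (1 - t)) * (A / t + B / (1 - t))) ≤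
      (A ^ 2 + B ^ 2) / 2 * (c * t * t * d + c * (d * (1 - t) * (1 - t))) +
        2 * A * B * (c * t * (d * (1 - t))) := by
  have h1t : (0:ℝ) < 1 - t := by linarith
  have key : c * t * t * (d * (1 - t) * (1 - t)) *
      ((B / t + A / (1 - t)) * (A / t + B / (1 - t))) =
      c * d * (A * B * (t ^ 2 + (1 - t) ^ 2) + (A ^ 2 + B ^ 2) * (t * (1 - t))) := by
    field_simp
    ring
  rw [key]
  nlinarith [mul_nonneg (mul_nonneg hc hd) (sq_nonneg ((A - B) * (t - (1 - t))))]

noncomputable def eulerBeta (m n : ℝ) : ℝ := ∫ t in (0:ℝ)..1, t ^ (m - 1) * (1 - t) ^ (n - 1)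

theorem thm_2_4 (f : ℝ → ℝ) (a b : ℝ) (ha : 0 ≤ a) (hab : a < b)
    (hf : ContinuousOn f (Icc a b)) (hnn : ∀ x ∈ Icc a b, 0 ≤ f x)
    (hQ : ∀ x ∈ Icc a b, ∀ y ∈ Icc a b, ∀ lam : ℝ, 0 < lam → lam < 1 →
      f (lam * x + (1 - lam) * y) ≤ f x / lam + f y / (1 - lam))
    (p q : ℝ) (hp : 1 < p) (hq : 1 < q) :
    ∫ x in a..b, (x - a) ^ p * (b - x) ^ q * (f x * f (a + b - x)) ≤
      (b - a) ^ (p + q + 1) / 2 *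
        ((f a ^ 2 + f b ^ 2) * (eulerBeta (p + 1) (q - 1) + eulerBeta (p - 1) (q + 1)) +
          4 * f a * f b * eulerBeta p q) := by
  have hba : (0:ℝ) < b - a := by linarith
  have ha' : a ∈ Icc a b := ⟨le_refl a, hab.le⟩
  have hb' : b ∈ Icc a b := ⟨hab.le, le_refl b⟩
  have hAnn : 0 ≤ f a := hnn a ha'
  have hBnn : 0 ≤ f b := hnn b hb'
  set F : ℝ → ℝ := fun x => (x - a) ^ p * (b - x) ^ q * (f x * f (a + b - x)) with hF
  have hgdef : ∀ t : ℝ, (fun t : ℝ =>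
      (f a ^ 2 + f b ^ 2) / 2 * (t ^ p * (1 - t) ^ (q - 2) + t ^ (p - 2) * (1 - t) ^ q) +
        2 * f a * f b * (t ^ (p - 1) * (1 - t) ^ (q - 1))) t =
      (f a ^ 2 + f b ^ 2) / 2 * (t ^ p * (1 - t) ^ (q - 2) + t ^ (p - 2) * (1 - t) ^ q) +
        2 * f a * f b * (t ^ (p - 1) * (1 - t) ^ (q - 1)) := fun _ => rfl
  -- integrability facts
  have I1 : IntervalIntegrable (fun t : ℝ => t ^ p * (1 - t) ^ (q - 2)) volume 0 1 :=
    betaInt p (q - 2) (by linarith) (by linarith)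
  have I2 : IntervalIntegrable (fun t : ℝ => t ^ (p - 2) * (1 - t) ^ q) volume 0 1 :=
    betaInt (p - 2) q (by linarith) (by linarith)
  have I3 : IntervalIntegrable (fun t : ℝ => t ^ (p - 1) * (1 - t) ^ (q - 1)) volume 0 1 :=
    betaInt (p - 1) (q - 1) (by linarith) (by linarith)
  have IG : IntervalIntegrable (fun t : ℝ => (b - a) ^ (p + q) *
      ((f a ^ 2 + f b ^ 2) / 2 * (t ^ p * (1 - t) ^ (q - 2) + t ^ (p - 2) * (1 - t) ^ q) +
        2 * f a * f b * (t ^ (p - 1) * (1 - t) ^ (q - 1)))) volume 0 1 :=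
    (((I1.add I2).const_mul ((f a ^ 2 + f b ^ 2) / 2)).add
      (I3.const_mul (2 * f a * f b))).const_mul _
  -- continuity / integrability of F ∘ affine
  have hmaps : ∀ t ∈ Icc (0:ℝ) 1, (b - a) * t + a ∈ Icc a b := by
    intro t ht
    constructor <;> nlinarith [ht.1, ht.2]
  have hmaps2 : ∀ x ∈ Icc a b, a + b - x ∈ Icc a b := by
    intro x hx
    constructor <;> [linarith [hx.2]; linarith [hx.1]]
  have hFcont : ContinuousOn F (Icc a b) := by
    apply ContinuousOn.mul
    · apply ContinuousOn.mul
      · exact ContinuousOn.rpow_const (continuousOn_id.sub continuousOn_const)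
          fun x _ => Or.inr (by linarith)
      · exact ContinuousOn.rpow_const (continuousOn_const.sub continuousOn_id)
          fun x _ => Or.inr (by linarith)
    · exact hf.mul (hf.comp ((continuous_const.sub continuous_id).continuousOn) hmaps2)
  have IF : IntervalIntegrable (fun t => F ((b - a) * t + a)) volume 0 1 := by
    apply ContinuousOn.intervalIntegrable
    rw [uIcc_of_le (zero_le_one)]
    exact hFcont.comp ((continuous_const.mul continuous_id).add continuous_const).continuousOn
      hmaps
  -- g is nonnegative on [0,1]
  have hgnn : ∀ t ∈ Icc (0:ℝ) 1,
      0 ≤ (f a ^ 2 + f b ^ 2) / 2 * (t ^ p * (1 - t) ^ (q - 2) + t ^ (p - 2) * (1 - t) ^ q) +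
        2 * f a * f b * (t ^ (p - 1) * (1 - t) ^ (q - 1)) := by
    intro t ht
    have h1 : (0:ℝ) ≤ 1 - t := by linarith [ht.2]
    apply add_nonneg
    · apply mul_nonneg (by positivity)
      exact add_nonneg (mul_nonneg (Real.rpow_nonneg ht.1 _) (Real.rpow_nonneg h1 _))
        (mul_nonneg (Real.rpow_nonneg ht.1 _) (Real.rpow_nonneg h1 _))
    · exact mul_nonneg (by positivity)
        (mul_nonneg (Real.rpow_nonneg ht.1 _) (Real.rpow_nonneg h1 _))
  -- pointwise bound
  have hpt : ∀ t ∈ Icc (0:ℝ) 1, F ((b - a) * t + a) ≤ (b - a) ^ (p + q) *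
      ((f a ^ 2 + f b ^ 2) / 2 * (t ^ p * (1 - t) ^ (q - 2) + t ^ (p - 2) * (1 - t) ^ q) +
        2 * f a * f b * (t ^ (p - 1) * (1 - t) ^ (q - 1))) := by
    intro t ht
    have hGnn : 0 ≤ (b - a) ^ (p + q) *
        ((f a ^ 2 + f b ^ 2) / 2 * (t ^ p * (1 - t) ^ (q - 2) + t ^ (p - 2) * (1 - t) ^ q) +
          2 * f a * f b * (t ^ (p - 1) * (1 - t) ^ (q - 1))) :=
      mul_nonneg (Real.rpow_nonneg hba.le _) (hgnn t ht)
    rcases eq_or_lt_of_le ht.1 with h0 | h0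
    · refine le_trans (le_of_eq ?_) hGnn
      rw [hF, ← h0]
      simp [Real.zero_rpow (show p ≠ 0 by linarith)]
    rcases eq_or_lt_of_le ht.2 with h1 | h1
    · refine le_trans (le_of_eq ?_) hGnn
      rw [hF, h1]
      have : b - ((b - a) * 1 + a) = 0 := by ring
      simp only [this, Real.zero_rpow (show q ≠ 0 by linarith)]
      ring
    -- main case 0 < t < 1
    have h1t : (0:ℝ) < 1 - t := by linarith
    have hxmem : (b - a) * t + a ∈ Icc a b := hmaps t ht
    have hx2mem : a + b - ((b - a) * t + a) ∈ Icc a b := hmaps2 _ hxmem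
    have hfx : f ((b - a) * t + a) ≤ f b / t + f a / (1 - t) := by
      have := hQ b hb' a ha' t h0 h1
      rwa [show t * b + (1 - t) * a = (b - a) * t + a by ring] at this
    have hfx2 : f (a + b - ((b - a) * t + a)) ≤ f a / t + f b / (1 - t) := by
      have := hQ a ha' b hb' t h0 h1
      rwa [show t * a + (1 - t) * b = a + b - ((b - a) * t + a) by ring] at this
    have hprod : f ((b - a) * t + a) * f (a + b - ((b - a) * t + a)) ≤
        (f b / t + f a / (1 - t)) * (f a / t + f b / (1 - t)) := by
      apply mul_le_mul hfx hfx2 (hnn _ hx2mem)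
      exact add_nonneg (div_nonneg hBnn h0.le) (div_nonneg hAnn h1t.le)
    have hFx : F ((b - a) * t + a) = (b - a) ^ (p + q) *
        (t ^ p * (1 - t) ^ q * (f ((b - a) * t + a) * f (a + b - ((b - a) * t + a)))) := by
      rw [hF]
      simp only
      rw [show (b - a) * t + a - a = (b - a) * t by ring,
        show b - ((b - a) * t + a) = (b - a) * (1 - t) by ring,
        Real.mul_rpow hba.le h0.le, Real.mul_rpow hba.le h1t.le, Real.rpow_add hba]
      ring
    rw [hFx]
    apply mul_le_mul_of_nonneg_left _ (Real.rpow_nonneg hba.le _)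
    have eP : t ^ p = t ^ (p - 2) * t * t := by
      rw [← Real.rpow_add_one h0.ne', ← Real.rpow_add_one h0.ne']
      congr 1
      ring
    have eP1 : t ^ (p - 1) = t ^ (p - 2) * t := by
      rw [← Real.rpow_add_one h0.ne']
      congr 1
      ring
    have eQ : (1 - t) ^ q = (1 - t) ^ (q - 2) * (1 - t) * (1 - t) := by
      rw [← Real.rpow_add_one h1t.ne', ← Real.rpow_add_one h1t.ne']
      congr 1
      ring
    have eQ1 : (1 - t) ^ (q - 1) = (1 - t) ^ (q - 2) * (1 - t) := by
      rw [← Real.rpow_add_one h1t.ne']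
      congr 1
      ring
    calc t ^ p * (1 - t) ^ q * (f ((b - a) * t + a) * f (a + b - ((b - a) * t + a)))
        ≤ t ^ p * (1 - t) ^ q * ((f b / t + f a / (1 - t)) * (f a / t + f b / (1 - t))) := by
          exact mul_le_mul_of_nonneg_left hprod
            (mul_nonneg (Real.rpow_nonneg h0.le _) (Real.rpow_nonneg h1t.le _))
      _ ≤ (f a ^ 2 + f b ^ 2) / 2 * (t ^ p * (1 - t) ^ (q - 2) + t ^ (p - 2) * (1 - t) ^ q) +
          2 * f a * f b * (t ^ (p - 1) * (1 - t) ^ (q - 1)) := by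
          rw [eP, eQ, eP1, eQ1]
          exact coreIneq (f a) (f b) (t ^ (p - 2)) ((1 - t) ^ (q - 2)) t hAnn hBnn
            (Real.rpow_nonneg h0.le _) (Real.rpow_nonneg h1t.le _) h0 h1
  -- change of variables
  have hcv : ∫ x in a..b, F x = (b - a) * ∫ t in (0:ℝ)..1, F ((b - a) * t + a) := by
    have h := intervalIntegral.smul_integral_comp_mul_add (a := 0) (b := 1) F (b - a) a
    simp only [mul_zero, zero_add, mul_one, smul_eq_mul, sub_add_cancel] at h
    rw [← h]
  have hmono := intervalIntegral.integral_mono_on zero_le_one IF IG hpt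
  -- value of ∫ G
  have hGval : (∫ t in (0:ℝ)..1, (b - a) ^ (p + q) *
      ((f a ^ 2 + f b ^ 2) / 2 * (t ^ p * (1 - t) ^ (q - 2) + t ^ (p - 2) * (1 - t) ^ q) +
        2 * f a * f b * (t ^ (p - 1) * (1 - t) ^ (q - 1)))) =
      (b - a) ^ (p + q) *
        ((f a ^ 2 + f b ^ 2) / 2 * ((∫ t in (0:ℝ)..1, t ^ p * (1 - t) ^ (q - 2)) +
          ∫ t in (0:ℝ)..1, t ^ (p - 2) * (1 - t) ^ q) +
          2 * f a * f b * ∫ t in (0:ℝ)..1, t ^ (p - 1) * (1 - t) ^ (q - 1)) := by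
    rw [intervalIntegral.integral_const_mul,
      intervalIntegral.integral_add ((I1.add I2).const_mul _) (I3.const_mul _),
      intervalIntegral.integral_const_mul, intervalIntegral.integral_const_mul,
      intervalIntegral.integral_add I1 I2]
  have hE1 : eulerBeta (p + 1) (q - 1) = ∫ t in (0:ℝ)..1, t ^ p * (1 - t) ^ (q - 2) := by
    rw [eulerBeta]
    simp only [show p + 1 - 1 = p from by ring, show q - 1 - 1 = q - 2 from by ring]
  have hE2 : eulerBeta (p - 1) (q + 1) = ∫ t in (0:ℝ)..1, t ^ (p - 2) * (1 - t) ^ q := by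
    rw [eulerBeta]
    simp only [show p - 1 - 1 = p - 2 from by ring, show q + 1 - 1 = q from by ring]
  have hE3 : eulerBeta p q = ∫ t in (0:ℝ)..1, t ^ (p - 1) * (1 - t) ^ (q - 1) := by
    rw [eulerBeta]
  show (∫ x in a..b, F x) ≤ _
  rw [hcv]
  calc (b - a) * ∫ t in (0:ℝ)..1, F ((b - a) * t + a)
      ≤ (b - a) * ∫ t in (0:ℝ)..1, (b - a) ^ (p + q) *
        ((f a ^ 2 + f b ^ 2) / 2 * (t ^ p * (1 - t) ^ (q - 2) + t ^ (p - 2) * (1 - t) ^ q) +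
          2 * f a * f b * (t ^ (p - 1) * (1 - t) ^ (q - 1))) :=
        mul_le_mul_of_nonneg_left hmono hba.le
    _ = (b - a) ^ (p + q + 1) / 2 *
        ((f a ^ 2 + f b ^ 2) * (eulerBeta (p + 1) (q - 1) + eulerBeta (p - 1) (q + 1)) +
          4 * f a * f b * eulerBeta p q) := by
        rw [hGval, hE1, hE2, hE3, Real.rpow_add hba (p + q) 1, Real.rpow_one]
        ring
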